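/- arXiv:0810.3218 — 2 statements merged into one kernel-verified Lean document; each statement's English description precedes it below -/
import Mathlib

section
/- There exist constants 0 < C₁ ≤ C₂ < ∞ such that for all x ∈ ℝ^{2n} and z ∈ ℝ^m, C₁·(|x| + |z|^{1/2}) ≤ d(x,z) ≤ C₂·(|x| + |z|^{1/2}); equivalently, d(x,z)² is bounded above and below by constant multiples of |x|² + |z|. -/
open scoped Real RealInnerProductSpace

/-- ν(θ) = (2θ − sin 2θ)/(1 − cos 2θ) for θ ∈ (0,π), ν(0) = 0. -/
noncomputable def nu (θ : ℝ) : ℝ :=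
  if θ = 0 then 0 else (2 * θ - Real.sin (2 * θ)) / (1 - Real.cos (2 * θ))

lemma nu_eq {θ : ℝ} (h0 : 0 < θ) (hπ : θ < π) :
    nu θ = (θ - Real.sin θ * Real.cos θ) / (Real.sin θ) ^ 2 := by
  have hs : 0 < Real.sin θ := Real.sin_pos_of_pos_of_lt_pi h0 hπ
  rw [nu, if_neg h0.ne', Real.sin_two_mul, Real.cos_two_mul']
  have h1 : 1 - (Real.cos θ ^ 2 - Real.sin θ ^ 2) = 2 * Real.sin θ ^ 2 := by
    nlinarith [Real.sin_sq_add_cos_sq θ]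
  rw [h1]
  field_simp

lemma num_le {θ : ℝ} (h0 : 0 < θ) :
    θ - Real.sin θ * Real.cos θ ≤ 4 * θ ^ 2 := by
  have h2 : Real.sin θ * Real.cos θ = Real.sin (2 * θ) / 2 := by
    rw [Real.sin_two_mul]; ring
  rw [h2]
  rcases le_or_gt (2 * θ) 1 with h | h
  · have := Real.sin_gt_sub_cube (by linarith : (0:ℝ) < 2 * θ)
    nlinarith
  · have := Real.neg_one_le_sin (2 * θ)
    nlinarith

lemma num_nonneg {θ : ℝ} (h0 : 0 < θ) :
    0 ≤ θ - Real.sin θ * Real.cos θ := by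
  have h2 : Real.sin θ * Real.cos θ = Real.sin (2 * θ) / 2 := by
    rw [Real.sin_two_mul]; ring
  have := Real.sin_le (by linarith : (0:ℝ) ≤ 2 * θ)
  rw [h2]; linarith

lemma D_bounds {θ : ℝ} (h0 : 0 < θ) (hπ : θ < π) :
    θ ^ 2 ≤ π * (4 * Real.sin θ ^ 2 + (θ - Real.sin θ * Real.cos θ)) ∧
    4 * Real.sin θ ^ 2 + (θ - Real.sin θ * Real.cos θ) ≤ 8 * θ ^ 2 := by
  have hs : 0 < Real.sin θ := Real.sin_pos_of_pos_of_lt_pi h0 hπ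
  have hsle : Real.sin θ ≤ θ := Real.sin_le h0.le
  have hnum := num_le h0
  have hnn := num_nonneg h0
  have hpi := Real.pi_gt_three
  have hpi4 : π < 4 := by nlinarith [Real.pi_lt_d2]
  constructor
  · rcases le_or_gt θ (π / 2) with h | h
    · have hj : 2 / π * θ ≤ Real.sin θ := Real.mul_le_sin h0.le h
      have h24 : θ / 2 ≤ 2 / π * θ := by
        rw [div_le_iff₀ (by norm_num : (0:ℝ) < 2)]
        rw [div_mul_eq_mul_div, div_mul_eq_mul_div, le_div_iff₀ Real.pi_pos]
        nlinarith
      have hhalf : θ / 2 ≤ Real.sin θ := h24.trans hj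
      nlinarith
    · have hsc : Real.sin θ * Real.cos θ ≤ 0 := by
        have h2 : Real.sin θ * Real.cos θ = Real.sin (2 * θ) / 2 := by
          rw [Real.sin_two_mul]; ring
        have hneg : Real.sin (2 * θ - 2 * π) ≤ 0 :=
          Real.sin_nonpos_of_nonpos_of_neg_pi_le (by linarith) (by linarith)
        rw [Real.sin_sub_two_pi] at hneg
        rw [h2]; linarith
      have hθπ2 : θ ^ 2 ≤ π * θ := by nlinarith
      have h4 : 0 ≤ π * (4 * Real.sin θ ^ 2) := by positivity
      have h5 : 0 ≤ π * (-(Real.sin θ * Real.cos θ)) :=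
        mul_nonneg Real.pi_pos.le (by linarith)
      nlinarith [h4, h5, hθπ2]
  · nlinarith

lemma exists_theta {y : ℝ} (hy : 0 < y) : ∃ θ ∈ Set.Ico 0 π, nu θ = y := by
  have hpi := Real.pi_gt_three
  obtain ⟨δ, hδ0, hδ1, hδsq⟩ : ∃ δ : ℝ, 0 < δ ∧ δ ≤ 1 ∧ y * δ ^ 2 ≤ 1 := by
    refine ⟨min 1 (Real.sqrt (1 / y)), lt_min one_pos (Real.sqrt_pos.2 (by positivity)),
      min_le_left _ _, ?_⟩
    have h1 : min 1 (Real.sqrt (1 / y)) ≤ Real.sqrt (1 / y) := min_le_right _ _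
    have h2 := Real.sq_sqrt (le_of_lt (show (0:ℝ) < 1 / y by positivity))
    have h0 : (0:ℝ) ≤ min 1 (Real.sqrt (1 / y)) :=
      le_min zero_le_one (Real.sqrt_nonneg _)
    have h3 : (min 1 (Real.sqrt (1 / y))) ^ 2 ≤ 1 / y := by nlinarith
    calc y * (min 1 (Real.sqrt (1 / y))) ^ 2 ≤ y * (1 / y) :=
          mul_le_mul_of_nonneg_left h3 hy.le
      _ = 1 := by field_simp
  obtain ⟨α, hα0, hα2, hαy⟩ : ∃ α : ℝ, 0 < α ∧ α ≤ 1/2 ∧ α ≤ y/2 :=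
    ⟨min (1/2) (y/2), lt_min (by norm_num) (by linarith), min_le_left _ _, min_le_right _ _⟩
  obtain ⟨β, hβ⟩ : ∃ β : ℝ, β = π - δ := ⟨_, rfl⟩
  obtain ⟨f, hfeq⟩ : ∃ f : ℝ → ℝ,
      ∀ t, f t = (t - Real.sin t * Real.cos t) / (Real.sin t) ^ 2 :=
    ⟨fun t => (t - Real.sin t * Real.cos t) / (Real.sin t) ^ 2, fun _ => rfl⟩
  have hβπ : β < π := by rw [hβ]; linarith
  have hβ2 : π / 2 ≤ β := by rw [hβ]; linarith
  have hαβ : α ≤ β := by rw [hβ]; linarith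
  -- f α ≤ y
  have hαsq : α ^ 2 ≤ 1/4 := by nlinarith
  have hsinα : α * (15/16) ≤ Real.sin α := by
    have h3 := Real.sin_gt_sub_cube hα0
    nlinarith [mul_le_mul_of_nonneg_left hαsq hα0.le]
  have hsinα0 : 0 < Real.sin α := lt_of_lt_of_le (by positivity) hsinα
  have hfα : f α ≤ y := by
    have hnum : α - Real.sin α * Real.cos α ≤ α ^ 3 := by
      have h2 : Real.sin α * Real.cos α = Real.sin (2 * α) / 2 := by
        rw [Real.sin_two_mul]; ring
      have := Real.sin_gt_sub_cube (by linarith : (0:ℝ) < 2 * α)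
      rw [h2]; nlinarith
    have hden : α ^ 2 * (225/256) ≤ Real.sin α ^ 2 := by nlinarith
    rw [hfeq, div_le_iff₀ (by positivity)]
    have h1 : α ^ 3 ≤ y / 2 * α ^ 2 := by nlinarith
    nlinarith [mul_le_mul_of_nonneg_left hden hy.le]
  -- y ≤ f β
  have hsinβ : Real.sin β ≤ δ := by
    have h : Real.sin β = Real.sin δ := by rw [hβ, Real.sin_pi_sub]
    rw [h]; exact Real.sin_le hδ0.le
  have hsinβ0 : 0 < Real.sin β := Real.sin_pos_of_pos_of_lt_pi (by linarith) hβπ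
  have hcosβ : Real.cos β ≤ 0 :=
    Real.cos_nonpos_of_pi_div_two_le_of_le hβ2 (by linarith)
  have hfβ : y ≤ f β := by
    rw [hfeq, le_div_iff₀ (by positivity)]
    have h1 : y * Real.sin β ^ 2 ≤ y * δ ^ 2 := by
      have := mul_le_mul hsinβ hsinβ hsinβ0.le hδ0.le
      nlinarith
    have h2 : 0 ≤ -(Real.sin β * Real.cos β) := by
      have := mul_nonpos_of_nonneg_of_nonpos hsinβ0.le hcosβ
      linarith
    have hβ3 : (2:ℝ) ≤ β := by rw [hβ]; linarith
    nlinarith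
  -- IVT
  have hcont : ContinuousOn f (Set.Icc α β) := by
    have : f = fun t => (t - Real.sin t * Real.cos t) / (Real.sin t) ^ 2 :=
      funext hfeq
    rw [this]
    apply ContinuousOn.div
    · exact (continuous_id.sub (Real.continuous_sin.mul Real.continuous_cos)).continuousOn
    · exact (Real.continuous_sin.pow 2).continuousOn
    · intro t ht
      have : 0 < Real.sin t :=
        Real.sin_pos_of_pos_of_lt_pi (lt_of_lt_of_le hα0 ht.1) (lt_of_le_of_lt ht.2 hβπ)
      positivity
  obtain ⟨θ, hθmem, hθ⟩ := intermediate_value_Icc hαβ hcont ⟨hfα, hfβ⟩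
  have hθ0 : 0 < θ := lt_of_lt_of_le hα0 hθmem.1
  have hθπ : θ < π := lt_of_le_of_lt hθmem.2 hβπ
  refine ⟨θ, ⟨hθ0.le, hθπ⟩, ?_⟩
  rw [nu_eq hθ0 hθπ, ← hfeq]
  exact hθ

/-- The unique solution θ ∈ [0,π) of ν(θ) = y. -/
noncomputable def thetaOf (y : ℝ) : ℝ :=
  haveI := Classical.propDecidable (∃ θ, θ ∈ Set.Ico 0 π ∧ nu θ = y)
  if h : ∃ θ, θ ∈ Set.Ico 0 π ∧ nu θ = y then h.choose else 0

lemma thetaOf_spec {y : ℝ} (hy : 0 < y) :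
    thetaOf y ∈ Set.Ico 0 π ∧ nu (thetaOf y) = y := by
  have h := exists_theta hy
  rw [thetaOf]
  rw [dif_pos h]
  exact h.choose_spec

lemma thetaOf_pos {y : ℝ} (hy : 0 < y) : 0 < thetaOf y := by
  obtain ⟨hmem, hnu⟩ := thetaOf_spec hy
  rcases lt_or_eq_of_le hmem.1 with h | h
  · exact h
  · exfalso
    rw [← h] at hnu
    rw [nu, if_pos rfl] at hnu
    linarith

/-- The Carnot–Carathéodory distance from the identity, as a function of |x| and |z|:
if x ≠ 0 and z ≠ 0 then d = |x|·θ/sin θ where θ ∈ [0,π) solves ν(θ) = 4|z|/|x|²;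
if z = 0 then d = |x|; if x = 0 then d = √(4π|z|). -/
noncomputable def dR (a b : ℝ) : ℝ :=
  if a = 0 then Real.sqrt (4 * π * b)
  else if b = 0 then a
  else a * thetaOf (4 * b / a ^ 2) / Real.sin (thetaOf (4 * b / a ^ 2))

lemma sqrt_four_pi_mul {b : ℝ} (hb : 0 ≤ b) :
    Real.sqrt (4 * π * b) = 2 * Real.sqrt π * Real.sqrt b := by
  rw [Real.sqrt_mul (by positivity), show (4:ℝ) * π = 2 ^ 2 * π by ring,
    Real.sqrt_mul (by positivity), Real.sqrt_sq (by norm_num)]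

lemma dR_bounds (a b : ℝ) (ha : 0 ≤ a) (hb : 0 ≤ b) :
    1 / 2 * (a + Real.sqrt b) ≤ dR a b ∧ dR a b ≤ 2 * Real.sqrt π * (a + Real.sqrt b) := by
  have hπ1 : 1 ≤ Real.sqrt π := by
    rw [show (1:ℝ) = Real.sqrt 1 from Real.sqrt_one.symm]
    exact Real.sqrt_le_sqrt (by linarith [Real.pi_gt_three])
  have ht0 : 0 ≤ Real.sqrt b := Real.sqrt_nonneg b
  by_cases ha0 : a = 0
  · subst ha0
    rw [dR, if_pos rfl, sqrt_four_pi_mul hb]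
    constructor
    · nlinarith
    · nlinarith
  · have ha' : 0 < a := lt_of_le_of_ne ha (Ne.symm ha0)
    by_cases hb0 : b = 0
    · subst hb0
      rw [dR, if_neg ha0, if_pos rfl, Real.sqrt_zero]
      constructor
      · linarith
      · nlinarith
    · have hb' : 0 < b := lt_of_le_of_ne hb (Ne.symm hb0)
      have hy : 0 < 4 * b / a ^ 2 := by positivity
      obtain ⟨hmem, hnu⟩ := thetaOf_spec hy
      set θ := thetaOf (4 * b / a ^ 2) with hθdef
      have hθ0 : 0 < θ := thetaOf_pos hy
      have hθπ : θ < π := hmem.2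
      have hs : 0 < Real.sin θ := Real.sin_pos_of_pos_of_lt_pi hθ0 hθπ
      set s := Real.sin θ with hsdef
      set c := Real.cos θ with hcdef
      have hD := D_bounds hθ0 hθπ
      have hbeq : 4 * b * s ^ 2 = a ^ 2 * (θ - s * c) := by
        rw [nu_eq hθ0 hθπ] at hnu
        field_simp at hnu
        have hs' : Real.sin θ ^ 2 ≠ 0 := pow_ne_zero 2 hs.ne'
        rw [div_eq_iff hs'] at hnu
        rw [hsdef, hcdef]
        linarith
      have hd : dR a b = a * θ / s := by rw [dR, if_neg ha0, if_neg hb0]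
      have hdpos : 0 < dR a b := by rw [hd]; positivity
      have hds : dR a b * s = a * θ := by rw [hd]; field_simp
      have hds2 : (dR a b) ^ 2 * s ^ 2 = a ^ 2 * θ ^ 2 := by
        rw [← mul_pow, hds, mul_pow]
      have ht2 : Real.sqrt b ^ 2 = b := Real.sq_sqrt hb
      set t := Real.sqrt b with htdef
      have hs2 : 0 < s ^ 2 := by positivity
      constructor
      · apply le_of_pow_le_pow_left₀ two_ne_zero hdpos.le
        rw [← mul_le_mul_iff_of_pos_right hs2, hds2]
        nlinarith [mul_le_mul_of_nonneg_left hD.2 (sq_nonneg a),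
          sq_nonneg ((a - t) * s), mul_nonneg (mul_nonneg ha ht0) hs2.le]
      · apply le_of_pow_le_pow_left₀ two_ne_zero (by positivity)
        rw [← mul_le_mul_iff_of_pos_right hs2, hds2]
        have h1 : a ^ 2 * θ ^ 2 ≤ π * (4 * a ^ 2 * s ^ 2 + a ^ 2 * (θ - s * c)) := by
          nlinarith [mul_le_mul_of_nonneg_left hD.1 (sq_nonneg a)]
        have h2 : a ^ 2 * (θ - s * c) = 4 * t ^ 2 * s ^ 2 := by
          rw [ht2]; linarith [hbeq]
        have hsqπ : Real.sqrt π ^ 2 = π := Real.sq_sqrt Real.pi_pos.le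
        have hgoal : (2 * Real.sqrt π * (a + t)) ^ 2 * s ^ 2
            = 4 * π * (a + t) ^ 2 * s ^ 2 := by
          rw [mul_pow, mul_pow, hsqπ]; ring
        rw [hgoal]
        have h2' : π * (a ^ 2 * (θ - s * c)) = π * (4 * t ^ 2 * s ^ 2) := by rw [h2]
        have h3 : π * (4 * a ^ 2 * s ^ 2 + 4 * t ^ 2 * s ^ 2) ≤ 4 * π * (a + t) ^ 2 * s ^ 2 := by
          nlinarith [mul_nonneg (mul_nonneg Real.pi_pos.le hs2.le) (mul_nonneg ha ht0)]
        linarith [h1, h2', h3]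

/-- The distance d(x,z) for x ∈ ℝ^{2n}, z ∈ ℝ^m. -/
noncomputable def dH {p q : ℕ} (x : EuclideanSpace ℝ (Fin p))
    (z : EuclideanSpace ℝ (Fin q)) : ℝ :=
  dR ‖x‖ ‖z‖

/-- There exist constants 0 < C₁ ≤ C₂ < ∞ with
C₁(|x| + |z|^{1/2}) ≤ d(x,z) ≤ C₂(|x| + |z|^{1/2}) for all x ∈ ℝ^{2n}, z ∈ ℝ^m. -/
theorem dist_comparable (n m : ℕ) (hn : 1 ≤ n) (hm : 1 ≤ m) :
    ∃ C₁ C₂ : ℝ, 0 < C₁ ∧ C₁ ≤ C₂ ∧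
      ∀ (x : EuclideanSpace ℝ (Fin (2 * n))) (z : EuclideanSpace ℝ (Fin m)),
        C₁ * (‖x‖ + Real.sqrt ‖z‖) ≤ dH x z ∧
        dH x z ≤ C₂ * (‖x‖ + Real.sqrt ‖z‖) := by
  have hπ1 : 1 ≤ Real.sqrt π := by
    rw [show (1:ℝ) = Real.sqrt 1 from Real.sqrt_one.symm]
    exact Real.sqrt_le_sqrt (by linarith [Real.pi_gt_three])
  refine ⟨1 / 2, 2 * Real.sqrt π, by norm_num, by linarith, fun x z => ?_⟩
  exact dR_bounds ‖x‖ ‖z‖ (norm_nonneg x) (norm_nonneg z)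
end

section
/- Let m ≥ 1, λ ∈ ℝ^m, θ ∈ (0,π), and let ẑ ∈ ℝ^m be a unit vector. Let ζ² := (λ + iθẑ)·(λ + iθẑ) = |λ|² − θ² + 2iθ(λ·ẑ) ∈ ℂ (complex bilinear dot product), and let s ∈ ℂ be any complex number with s² = ζ² and Im s ≥ 0. Then Re(G(s)) ≥ θ·cot θ, where G(w) = w·coth w = w cosh w / sinh w extended continuously by G(0) = 1 (G is well defined since Im s ≤ θ < π, so sinh s ≠ 0 unless s = 0). Equality holds if and only if λ = 0. -/
open scoped Real RealInnerProductSpace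

/-- G(w) = w coth w = w cosh w / sinh w, extended continuously by G(0) = 1. -/
noncomputable def Gcoth (w : ℂ) : ℂ :=
  if w = 0 then 1 else w * Complex.cosh w / Complex.sinh w

lemma aux_tc_lt_sin {θ : ℝ} (h0 : 0 < θ) (hπ : θ < π) : θ * Real.cos θ < Real.sin θ := by
  rcases lt_or_ge θ (π/2) with h | h
  · have hc : 0 < Real.cos θ := Real.cos_pos_of_mem_Ioo ⟨by linarith [Real.pi_pos], h⟩
    have ht := Real.lt_tan h0 h
    rw [Real.tan_eq_sin_div_cos, lt_div_iff₀ hc] at ht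
    linarith
  · have hc : Real.cos θ ≤ 0 :=
      Real.cos_nonpos_of_pi_div_two_le_of_le h (by linarith [Real.pi_pos])
    have hs : 0 < Real.sin θ := Real.sin_pos_of_pos_of_lt_pi h0 hπ
    nlinarith

lemma aux_mono {τ δ : ℝ} (hτ : 0 < τ) (hδ : 0 < δ) (hπ : τ + δ < π) :
    (τ + δ) * Real.cos (τ + δ) * Real.sin τ < τ * Real.cos τ * Real.sin (τ + δ) := by
  have hsinδ : 0 < Real.sin δ := Real.sin_pos_of_pos_of_lt_pi hδ (by linarith)
  have hsinτ : 0 < Real.sin τ := Real.sin_pos_of_pos_of_lt_pi hτ (by linarith)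
  have e : τ * Real.cos τ * Real.sin (τ + δ) - (τ + δ) * Real.cos (τ + δ) * Real.sin τ
      = τ * Real.sin δ - δ * Real.cos (τ + δ) * Real.sin τ := by
    rw [Real.sin_add, Real.cos_add]
    linear_combination (τ * Real.sin δ) * (Real.sin_sq_add_cos_sq τ)
  have key : δ * Real.cos (τ + δ) * Real.sin τ < τ * Real.sin δ := by
    rcases le_or_gt (Real.cos (τ + δ)) 0 with hc | hc
    · have h1 : δ * Real.cos (τ + δ) * Real.sin τ ≤ 0 := by nlinarith [mul_pos hδ hsinτ]
      nlinarith [mul_pos hτ hsinδ]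
    · have h1 : Real.cos (τ + δ) < Real.cos δ :=
        Real.cos_lt_cos_of_nonneg_of_le_pi (le_of_lt hδ) (by linarith) (by linarith)
      have h2 : δ * Real.cos δ < Real.sin δ := aux_tc_lt_sin hδ (by linarith)
      have h3 : Real.sin τ < τ := Real.sin_lt hτ
      calc δ * Real.cos (τ + δ) * Real.sin τ < δ * Real.cos δ * Real.sin τ := by
              nlinarith [mul_pos hδ hsinτ]
        _ < Real.sin δ * Real.sin τ := by nlinarith
        _ < τ * Real.sin δ := by nlinarith
  linarith

lemma aux_sinh_lt {x : ℝ} (hx : 0 < x) : Real.sinh x < x * Real.cosh x := by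
  have hmono : StrictMonoOn (fun t : ℝ => t * Real.cosh t - Real.sinh t) (Set.Ici 0) := by
    apply strictMonoOn_of_deriv_pos (convex_Ici 0)
    · fun_prop
    · intro t ht
      rw [interior_Ici] at ht
      have hd : HasDerivAt (fun t : ℝ => t * Real.cosh t - Real.sinh t) (t * Real.sinh t) t := by
        have := ((hasDerivAt_id t).mul (Real.hasDerivAt_cosh t)).sub (Real.hasDerivAt_sinh t)
        exact this.congr_deriv (by simp)
      rw [hd.deriv]
      exact mul_pos ht (Real.sinh_pos_iff.2 ht)
  have := hmono (Set.self_mem_Ici) (Set.mem_Ici.2 (le_of_lt hx)) hx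
  simpa using this

lemma aux_sq_le {x : ℝ} : Real.sinh x ^ 2 ≤ x * Real.sinh x * Real.cosh x := by
  rcases lt_trichotomy x 0 with h | h | h
  · have h1 := aux_sinh_lt (show 0 < -x by linarith)
    rw [Real.sinh_neg, Real.cosh_neg] at h1
    nlinarith [(Real.sinh_neg_iff).2 h, Real.cosh_pos (x := x)]
  · simp [h]
  · nlinarith [aux_sinh_lt h, Real.sinh_pos_iff.2 h, Real.cosh_pos (x := x)]

lemma aux_sq_lt {x : ℝ} (hx : x ≠ 0) : Real.sinh x ^ 2 < x * Real.sinh x * Real.cosh x := by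
  rcases lt_or_gt_of_ne hx with h | h
  · have h1 := aux_sinh_lt (show 0 < -x by linarith)
    rw [Real.sinh_neg, Real.cosh_neg] at h1
    nlinarith [(Real.sinh_neg_iff).2 h, Real.cosh_pos (x := x)]
  · nlinarith [aux_sinh_lt h, Real.sinh_pos_iff.2 h, Real.cosh_pos (x := x)]

lemma main_lt {σ τ θ : ℝ} (hθ0 : 0 < θ) (hθπ : θ < π) (hτ0 : 0 ≤ τ) (hτθ : τ ≤ θ)
    (hne : ¬(σ = 0 ∧ τ = θ)) (hs0 : σ ≠ 0 ∨ τ ≠ 0) :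
    θ * Real.cos θ * (Real.sinh σ ^ 2 + Real.sin τ ^ 2)
      < (σ * Real.sinh σ * Real.cosh σ + τ * Real.sin τ * Real.cos τ) * Real.sin θ := by
  have hsθ : 0 < Real.sin θ := Real.sin_pos_of_pos_of_lt_pi hθ0 hθπ
  have htc := aux_tc_lt_sin hθ0 hθπ
  -- term 2 inequality: θ cos θ * sin τ ^ 2 ≤ τ sin τ cos τ * sin θ
  have t2 : θ * Real.cos θ * Real.sin τ ^ 2 ≤ τ * Real.sin τ * Real.cos τ * Real.sin θ := by
    rcases eq_or_lt_of_le hτ0 with h0 | h0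
    · simp [← h0]
    · rcases eq_or_lt_of_le hτθ with he | hlt
      · subst he; ring_nf; nlinarith
      · have := aux_mono h0 (show 0 < θ - τ by linarith) (by linarith)
        have h' : θ * Real.cos θ * Real.sin τ < τ * Real.cos τ * Real.sin θ := by
          have e : τ + (θ - τ) = θ := by ring
          rwa [e] at this
        have hsτ : 0 < Real.sin τ := Real.sin_pos_of_pos_of_lt_pi h0 (by linarith)
        nlinarith
  rcases hs0 with hσ | hτ
  · -- σ ≠ 0 : term 1 strict
    have h1 := aux_sq_lt hσ
    have hsq : 0 < Real.sinh σ ^ 2 := by positivity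
    nlinarith
  · -- σ = 0 not forced; but if σ ≠ 0 use previous branch, else strictness from term 2
    rcases eq_or_ne σ 0 with rfl | hσ
    · have hτθ' : τ ≠ θ := fun h => hne ⟨rfl, h⟩
      have h0 : 0 < τ := lt_of_le_of_ne hτ0 (Ne.symm hτ)
      have hlt : τ < θ := lt_of_le_of_ne hτθ hτθ'
      have := aux_mono h0 (show 0 < θ - τ by linarith) (by linarith)
      have e : τ + (θ - τ) = θ := by ring
      rw [e] at this
      have hsτ : 0 < Real.sin τ := Real.sin_pos_of_pos_of_lt_pi h0 (by linarith)
      simp only [Real.sinh_zero]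
      nlinarith
    · have h1 := aux_sq_lt hσ
      have hsq : 0 < Real.sinh σ ^ 2 := by positivity
      nlinarith

lemma Gcoth_re_eq (s : ℂ) (h : s ≠ 0) :
    (Gcoth s).re = (s.re * Real.sinh s.re * Real.cosh s.re + s.im * Real.sin s.im * Real.cos s.im) /
      (Real.sinh s.re ^ 2 + Real.sin s.im ^ 2) := by
  have hsinh : Complex.sinh s
      = ((Real.sinh s.re * Real.cos s.im : ℝ) : ℂ) + ((Real.cosh s.re * Real.sin s.im : ℝ) : ℂ) * Complex.I := by
    conv_lhs => rw [← Complex.re_add_im s]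
    rw [Complex.sinh_add, Complex.cosh_mul_I, Complex.sinh_mul_I, ← Complex.ofReal_sinh,
      ← Complex.ofReal_cosh, ← Complex.ofReal_cos, ← Complex.ofReal_sin]
    push_cast
    ring
  have hcosh : Complex.cosh s
      = ((Real.cosh s.re * Real.cos s.im : ℝ) : ℂ) + ((Real.sinh s.re * Real.sin s.im : ℝ) : ℂ) * Complex.I := by
    conv_lhs => rw [← Complex.re_add_im s]
    rw [Complex.cosh_add, Complex.cosh_mul_I, Complex.sinh_mul_I, ← Complex.ofReal_sinh,
      ← Complex.ofReal_cosh, ← Complex.ofReal_cos, ← Complex.ofReal_sin]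
    push_cast
    ring
  have hsr : (Complex.sinh s).re = Real.sinh s.re * Real.cos s.im := by rw [hsinh]; simp only [Complex.add_re, Complex.add_im, Complex.ofReal_re, Complex.ofReal_im, Complex.mul_re, Complex.mul_im, Complex.I_re, Complex.I_im]; ring
  have hsi : (Complex.sinh s).im = Real.cosh s.re * Real.sin s.im := by rw [hsinh]; simp only [Complex.add_re, Complex.add_im, Complex.ofReal_re, Complex.ofReal_im, Complex.mul_re, Complex.mul_im, Complex.I_re, Complex.I_im]; ring
  have hcr : (Complex.cosh s).re = Real.cosh s.re * Real.cos s.im := by rw [hcosh]; simp only [Complex.add_re, Complex.add_im, Complex.ofReal_re, Complex.ofReal_im, Complex.mul_re, Complex.mul_im, Complex.I_re, Complex.I_im]; ring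
  have hci : (Complex.cosh s).im = Real.sinh s.re * Real.sin s.im := by rw [hcosh]; simp only [Complex.add_re, Complex.add_im, Complex.ofReal_re, Complex.ofReal_im, Complex.mul_re, Complex.mul_im, Complex.I_re, Complex.I_im]; ring
  have hnsq : Complex.normSq (Complex.sinh s) = Real.sinh s.re ^ 2 + Real.sin s.im ^ 2 := by
    rw [Complex.normSq_apply, hsr, hsi]
    linear_combination (Real.sinh s.re ^ 2) * (Real.sin_sq_add_cos_sq s.im)
      + (Real.sin s.im ^ 2) * (Real.cosh_sq_sub_sinh_sq s.re)
  rw [Gcoth, if_neg h, Complex.div_re, hnsq, Complex.mul_re, Complex.mul_im, hsr, hsi, hcr, hci,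
    ← add_div]
  congr 1
  linear_combination (s.re * Real.sinh s.re * Real.cosh s.re) * (Real.sin_sq_add_cos_sq s.im)
    + (s.im * Real.sin s.im * Real.cos s.im) * (Real.cosh_sq_sub_sinh_sq s.re)

set_option maxHeartbeats 1000000 in
/-- Let λ ∈ ℝ^m, θ ∈ (0,π), ẑ a unit vector, and s ∈ ℂ with
s² = (λ+iθẑ)·(λ+iθẑ) = |λ|² − θ² + 2iθ(λ·ẑ) and Im s ≥ 0.  Then
Re(G(s)) ≥ θ cot θ, with equality iff λ = 0. -/
theorem re_Gcoth_ge (m : ℕ) (hm : 1 ≤ m) (lam zhat : EuclideanSpace ℝ (Fin m))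
    (θ : ℝ) (hθ0 : 0 < θ) (hθπ : θ < π) (hzhat : ‖zhat‖ = 1) (s : ℂ)
    (hs : s ^ 2 = ((‖lam‖ ^ 2 - θ ^ 2 : ℝ) : ℂ) + 2 * (θ : ℂ) * (⟪lam, zhat⟫ : ℝ) * Complex.I)
    (him : 0 ≤ s.im) :
    θ * (Real.cos θ / Real.sin θ) ≤ (Gcoth s).re ∧
    ((Gcoth s).re = θ * (Real.cos θ / Real.sin θ) ↔ lam = 0) := by
  have hsθ : 0 < Real.sin θ := Real.sin_pos_of_pos_of_lt_pi hθ0 hθπ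
  have htc := aux_tc_lt_sin hθ0 hθπ
  set p : ℝ := ⟪lam, zhat⟫ with hp
  have hs' := hs
  rw [Complex.ext_iff] at hs'
  obtain ⟨h1, h2⟩ := hs'
  simp only [pow_two, Complex.mul_re, Complex.mul_im, Complex.add_re, Complex.add_im,
    Complex.ofReal_re, Complex.ofReal_im, Complex.I_re, Complex.I_im, Complex.re_ofNat, Complex.im_ofNat] at h1 h2
  -- h1 : s.re*s.re - s.im*s.im = ‖lam‖^2 - θ^2 (approximately), h2 similar
  have hpn : |p| ≤ ‖lam‖ := by
    have := abs_real_inner_le_norm lam zhat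
    rwa [hzhat, mul_one] at this
  have h1' : s.re ^ 2 - s.im ^ 2 = ‖lam‖ ^ 2 - θ ^ 2 := by nlinarith [h1]
  have h2' : s.re * s.im = θ * p := by nlinarith [h2]
  clear h1 h2
  -- Im s ≤ θ
  have hτθ : s.im ≤ θ := by
    by_contra hgt
    push_neg at hgt
    have hσ2 : ‖lam‖ ^ 2 < s.re ^ 2 := by nlinarith
    have hpp : p ^ 2 ≤ ‖lam‖ ^ 2 := by nlinarith [hpn, abs_nonneg p, sq_abs p]
    have hσpos : 0 < s.re ^ 2 := lt_of_le_of_lt (sq_nonneg _) hσ2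
    have ht2 : θ ^ 2 < s.im ^ 2 := by nlinarith
    have e1 : (s.re * s.im) ^ 2 = θ ^ 2 * p ^ 2 := by rw [h2']; ring
    nlinarith [mul_lt_mul_of_pos_left ht2 hσpos,
      mul_lt_mul_of_pos_right hσ2 (mul_pos hθ0 hθ0),
      mul_le_mul_of_nonneg_left hpp (sq_nonneg θ), e1]
  -- the case lam = 0 : then s.re = 0 and s.im = θ
  have hlam0 : lam = 0 → s.re = 0 ∧ s.im = θ := by
    intro h0
    have hp0 : p = 0 := by rw [hp, h0, inner_zero_left]
    rw [h0] at h1'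
    simp only [norm_zero] at h1'
    rw [hp0, mul_zero] at h2'
    have hσ : s.re = 0 := by
      rcases mul_eq_zero.1 h2' with h | h
      · exact h
      · exfalso; rw [h] at h1'; nlinarith
    refine ⟨hσ, ?_⟩
    rw [hσ] at h1'
    have : s.im ^ 2 = θ ^ 2 := by nlinarith
    nlinarith
  have heq : lam = 0 → (Gcoth s).re = θ * (Real.cos θ / Real.sin θ) := by
    intro h0
    obtain ⟨hσ, hτ⟩ := hlam0 h0
    have hsne : s ≠ 0 := by
      intro h
      rw [h] at hτ
      simp at hτ
      exact absurd hτ.symm (ne_of_gt hθ0)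
    rw [Gcoth_re_eq s hsne, hσ, hτ]
    simp only [Real.sinh_zero]
    field_simp
    ring
  have hlt : lam ≠ 0 → θ * (Real.cos θ / Real.sin θ) < (Gcoth s).re := by
    intro hlam
    rcases eq_or_ne s 0 with rfl | hsne
    · -- s = 0 : Gcoth 0 = 1 and θ cot θ < 1
      rw [Gcoth, if_pos rfl]
      simp only [Complex.one_re]
      rw [mul_div_assoc', div_lt_one hsθ]
      exact htc
    · have hne : ¬(s.re = 0 ∧ s.im = θ) := by
        rintro ⟨hσ, hτ⟩
        apply hlam
        rw [hσ, hτ] at h1'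
        have : ‖lam‖ = 0 := by nlinarith [norm_nonneg lam]
        exact norm_eq_zero.1 this
      have hs0 : s.re ≠ 0 ∨ s.im ≠ 0 := by
        by_contra hc
        push_neg at hc
        exact hsne (Complex.ext hc.1 hc.2)
      have hD : 0 < Real.sinh s.re ^ 2 + Real.sin s.im ^ 2 := by
        rcases hs0 with h | h
        · have : Real.sinh s.re ≠ 0 := by
            rcases lt_or_gt_of_ne h with hl | hg
            · exact ne_of_lt (Real.sinh_neg_iff.2 hl)
            · exact ne_of_gt (Real.sinh_pos_iff.2 hg)
          positivity
        · have h0' : 0 < s.im := lt_of_le_of_ne him (Ne.symm h)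
          have : 0 < Real.sin s.im := Real.sin_pos_of_pos_of_lt_pi h0' (by linarith)
          positivity
      rw [Gcoth_re_eq s hsne, mul_div_assoc', div_lt_div_iff₀ hsθ hD]
      have := main_lt hθ0 hθπ him hτθ hne hs0
      linarith
  constructor
  · rcases eq_or_ne lam 0 with h0 | h0
    · exact le_of_eq (heq h0).symm
    · exact le_of_lt (hlt h0)
  · constructor
    · intro h
      by_contra hlam
      linarith [hlt hlam, h.le]
    · exact heq
end
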